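/- For every n ≥ 1, P_n · C_n = t · J_{t·4^n, v_n}, where v_n := (v+(2^{n+1}−4)t)·2^{n−1}. -/

import Mathlib

open Matrix Kronecker

def Jmat (m l : ℕ) : Matrix (Fin m) (Fin l) ℤ := Matrix.of fun _ _ => 1
def Kmat (m : ℕ) : Matrix (Fin m) (Fin m) ℤ :=
  Matrix.of fun i j => if (j : ℕ) = m - 1 - (i : ℕ) then 1 else 0
def kron {m n p q : ℕ} (A : Matrix (Fin m) (Fin n) ℤ) (B : Matrix (Fin p) (Fin q) ℤ) :
    Matrix (Fin (m * p)) (Fin (n * q)) ℤ :=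
  Matrix.reindex finProdFinEquiv finProdFinEquiv (A ⊗ₖ B)
def castM {m n m' n' : ℕ} (hm : m = m') (hn : n = n') (A : Matrix (Fin m) (Fin n) ℤ) :
    Matrix (Fin m') (Fin n') ℤ :=
  Matrix.reindex (finCongr hm) (finCongr hn) A
def alphaM {m l : ℕ} (s : ℕ) (X : Matrix (Fin m) (Fin l) ℤ) :
    Matrix (Fin (m / s)) (Fin l) ℤ :=
  Matrix.of fun i j => X (Fin.castLE (Nat.div_le_self m s) i) j
def vstack {m₁ m₂ l : ℕ} (X : Matrix (Fin m₁) (Fin l) ℤ) (Y : Matrix (Fin m₂) (Fin l) ℤ) :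
    Matrix (Fin (m₁ + m₂)) (Fin l) ℤ :=
  Matrix.reindex finSumFinEquiv (Equiv.refl _) (Matrix.fromRows X Y)
def hstack {m l₁ l₂ : ℕ} (X : Matrix (Fin m) (Fin l₁) ℤ) (Y : Matrix (Fin m) (Fin l₂) ℤ) :
    Matrix (Fin m) (Fin (l₁ + l₂)) ℤ :=
  Matrix.reindex (Equiv.refl _) finSumFinEquiv (Matrix.fromCols X Y)
def block2 {a b c d : ℕ} (A : Matrix (Fin a) (Fin c) ℤ) (B : Matrix (Fin a) (Fin d) ℤ)
    (C : Matrix (Fin b) (Fin c) ℤ) (D : Matrix (Fin b) (Fin d) ℤ) :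
    Matrix (Fin (a + b)) (Fin (c + d)) ℤ :=
  Matrix.reindex finSumFinEquiv finSumFinEquiv (Matrix.fromBlocks A B C D)
lemma four_pow_eq (n : ℕ) : (4 : ℕ) ^ n = 2 ^ n * 2 ^ n := by
  rw [show (4 : ℕ) = 2 * 2 from rfl, mul_pow]
lemma t_four_pow_div (t n : ℕ) : t * 4 ^ n / 2 ^ n = t * 2 ^ n := by
  rw [four_pow_eq, ← mul_assoc, Nat.mul_div_cancel _ (by positivity)]
def vnum (v t n : ℕ) : ℕ := (v + (2 ^ (n + 1) - 4) * t) * 2 ^ (n - 1)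
lemma vnum_one (v t : ℕ) : vnum v t 1 = v := by norm_num [vnum]
lemma vnum_succ (v t n : ℕ) :
    vnum v t (n + 2) = 2 * vnum v t (n + 1) + 2 * (t * 4 ^ (n + 1)) := by
  unfold vnum
  simp only [show n + 2 + 1 = n + 3 from rfl, show n + 2 - 1 = n + 1 from rfl,
    show n + 1 + 1 = n + 2 from rfl, show n + 1 - 1 = n from rfl]
  have h2 : (4 : ℕ) ≤ 2 ^ (n + 2) := by
    calc (4 : ℕ) = 2 ^ 2 := rfl
    _ ≤ 2 ^ (n + 2) := Nat.pow_le_pow_right (by norm_num) (by omega)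
  have h3 : (4 : ℕ) ≤ 2 ^ (n + 3) := le_trans h2 (Nat.pow_le_pow_right (by norm_num) (by omega))
  rw [four_pow_eq]
  zify [h2, h3]
  ring
def Pmat (t n : ℕ) : Matrix (Fin (t * 4 ^ n)) (Fin (t * 4 ^ n)) ℤ :=
  castM (by rw [four_pow_eq]; ring) (by rw [four_pow_eq]; ring)
    (kron (kron (Jmat (2 ^ n) 1) (Kmat (2 ^ n))) (Jmat t (t * 2 ^ n)))
def Pone (t : ℕ) : Matrix (Fin (4 * t)) (Fin (4 * t)) ℤ :=
  castM (by ring) (by ring) (kron (kron (Jmat 2 1) (Kmat 2)) (Jmat t (2 * t)))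

/-- The recursively defined sequence `P'_n` of Lemma 2. -/
def P'mat (t : ℕ) : (n : ℕ) → Matrix (Fin (t * 4 ^ n)) (Fin (t * 4 ^ n)) ℤ
  | 0 => 0
  | 1 => castM (by ring) (by ring) (kron (kron (Jmat 2 1) (Kmat 2)) (Jmat t (2 * t)))
  | (n + 2) =>
      castM
        (by rw [t_four_pow_div, four_pow_eq]; ring)
        (by ring)
        (kron (kron (kron (Jmat (2 ^ (n + 2)) 1) (Kmat 2))
          (alphaM (2 ^ (n + 1)) (P'mat t (n + 1)))) (Jmat 1 2))

/-- The recursively defined sequence `B_n` (with `B_1` given). -/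
def Bmat (t v : ℕ) (B₁ : Matrix (Fin v) (Fin (4 * t)) ℤ) :
    (n : ℕ) → Matrix (Fin (vnum v t n)) (Fin (t * 4 ^ n)) ℤ
  | 0 => 0
  | 1 => castM (vnum_one v t).symm (by ring) B₁
  | (n + 2) =>
      castM (by rw [vnum_succ]; try ring) (by ring)
        (vstack (kron (kron (Kmat 2) (Bmat t v B₁ (n + 1))) (Jmat 1 2))
          (kron (kron (1 : Matrix (Fin 2) (Fin 2) ℤ) (Pmat t (n + 1))) (Jmat 1 2)))

/-- The recursively defined sequence `C_n` (with `C_1` given). -/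
def Cmat (t v : ℕ) (C₁ : Matrix (Fin (4 * t)) (Fin v) ℤ) :
    (n : ℕ) → Matrix (Fin (t * 4 ^ n)) (Fin (vnum v t n)) ℤ
  | 0 => 0
  | 1 => castM (by ring) (vnum_one v t).symm C₁
  | (n + 2) =>
      castM (by rw [t_four_pow_div, four_pow_eq]; ring) (by rw [vnum_succ]; try ring)
        (hstack
          (kron (kron (Jmat (2 ^ (n + 2)) 1) (1 : Matrix (Fin 2) (Fin 2) ℤ))
            (alphaM (2 ^ (n + 1)) (Cmat t v C₁ (n + 1))))
          (kron (kron (Jmat (2 ^ (n + 2)) 1) (1 : Matrix (Fin 2) (Fin 2) ℤ))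
            (alphaM (2 ^ (n + 1)) (Pmat t (n + 1)))))

/-- The recursively defined sequence `A_n` (with `A_1`, `B_1`, `C_1` given). -/
def Amat (t v : ℕ) (A₁ : Matrix (Fin v) (Fin v) ℤ) (B₁ : Matrix (Fin v) (Fin (4 * t)) ℤ)
    (C₁ : Matrix (Fin (4 * t)) (Fin v) ℤ) :
    (n : ℕ) → Matrix (Fin (vnum v t n)) (Fin (vnum v t n)) ℤ
  | 0 => 0
  | 1 => castM (vnum_one v t).symm (vnum_one v t).symm A₁
  | (n + 2) =>
      castM (by rw [vnum_succ]) (by rw [vnum_succ])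
        (block2 (kron (1 : Matrix (Fin 2) (Fin 2) ℤ) (Amat t v A₁ B₁ C₁ (n + 1)))
          (kron (1 : Matrix (Fin 2) (Fin 2) ℤ) (Bmat t v B₁ (n + 1)))
          (kron (Kmat 2) (Cmat t v C₁ (n + 1)))
          (kron (Kmat 2) (Pmat t (n + 1))))


section AuxLemmas

lemma castM_apply {m n m' n' : ℕ} (hm : m = m') (hn : n = n') (A : Matrix (Fin m) (Fin n) ℤ)
    (i : Fin m') (j : Fin n') :
    castM hm hn A i j = A ⟨i, hm ▸ i.2⟩ ⟨j, hn ▸ j.2⟩ := rfl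

lemma kron_apply {m n p q : ℕ} (A : Matrix (Fin m) (Fin n) ℤ) (B : Matrix (Fin p) (Fin q) ℤ)
    (i : Fin (m * p)) (j : Fin (n * q)) (hp : 0 < p) (hq : 0 < q) :
    kron A B i j = A ⟨(i : ℕ) / p, (Nat.div_lt_iff_lt_mul hp).2 i.2⟩
      ⟨(j : ℕ) / q, (Nat.div_lt_iff_lt_mul hq).2 j.2⟩ *
      B ⟨(i : ℕ) % p, Nat.mod_lt _ hp⟩ ⟨(j : ℕ) % q, Nat.mod_lt _ hq⟩ := rfl

lemma sub_bound (a x : ℕ) (ha : 0 < a) : a - 1 - x < a :=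
  lt_of_le_of_lt (Nat.sub_le _ _) (Nat.sub_lt ha one_pos)

/-- split `Fin (t * M)`: index `s + t * a`. -/
def splitE (M t : ℕ) (ht : 0 < t) : Fin M × Fin t ≃ Fin (t * M) where
  toFun x := ⟨(x.2 : ℕ) + t * (x.1 : ℕ), by
    have h1 := x.1.2; have h2 := x.2.2
    calc (x.2 : ℕ) + t * x.1 < t * ((x.1 : ℕ) + 1) := by rw [Nat.mul_succ]; omega
    _ ≤ t * M := Nat.mul_le_mul_left _ (by omega)⟩
  invFun r := (⟨(r : ℕ) / t, (Nat.div_lt_iff_lt_mul ht).2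
      (Nat.lt_of_lt_of_eq r.2 (Nat.mul_comm t M))⟩, ⟨(r : ℕ) % t, Nat.mod_lt _ ht⟩)
  left_inv := fun ⟨a, s⟩ => by
    have h2 := s.2
    ext
    · simp [Nat.add_mul_div_left _ _ ht, Nat.div_eq_of_lt h2]
    · simp [Nat.add_mul_mod_self_left, Nat.mod_eq_of_lt h2]
  right_inv := fun r => by
    ext
    simp [Nat.mod_add_div]

@[simp] lemma splitE_val (M t : ℕ) (ht : 0 < t) (x : Fin M × Fin t) :
    ((splitE M t ht x : Fin (t * M)) : ℕ) = (x.2 : ℕ) + t * (x.1 : ℕ) := rfl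

lemma Pmat_apply (t n : ℕ) (i j : Fin (t * 4 ^ n)) (ht : 0 < t) :
    Pmat t n i j =
      if (j : ℕ) / (t * 2 ^ n) = 2 ^ n - 1 - ((i : ℕ) / t % 2 ^ n) then 1 else 0 := by
  have h2 : (0:ℕ) < 2 ^ n := Nat.pow_pos (by norm_num)
  have htn : (0:ℕ) < t * 2 ^ n := Nat.mul_pos ht h2
  rw [Pmat, castM_apply,
    kron_apply _ _ _ _ ht htn,
    kron_apply _ _ _ _ h2 h2]
  have hjlt : (j : ℕ) / (t * 2 ^ n) < 2 ^ n := by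
    apply (Nat.div_lt_iff_lt_mul htn).2
    have e : 2 ^ n * (t * 2 ^ n) = t * 4 ^ n := by rw [four_pow_eq]; ring
    rw [e]; exact j.2
  have hjlt' : (j : ℕ) / (t * 2 ^ n) < 1 * 2 ^ n := by omega
  simp only [Jmat, Kmat, Matrix.of_apply, one_mul, mul_one, Nat.mod_eq_of_lt hjlt]

lemma Psum (t n : ℕ) (ht : 0 < t) (c : Fin (t * 4 ^ n)) :
    ∑ r : Fin (t * 2 ^ n),
      Pmat t n ⟨(r : ℕ), lt_of_lt_of_le r.2 (by
        rw [four_pow_eq]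
        exact Nat.mul_le_mul_left _ (Nat.le_mul_of_pos_left _ (Nat.pow_pos (by norm_num))))⟩ c
      = (t : ℤ) := by
  have h2 : (0:ℕ) < 2 ^ n := Nat.pow_pos (by norm_num)
  have htn : (0:ℕ) < t * 2 ^ n := Nat.mul_pos ht h2
  have hc : (c : ℕ) / (t * 2 ^ n) < 2 ^ n := by
    apply (Nat.div_lt_iff_lt_mul htn).2
    have e : 2 ^ n * (t * 2 ^ n) = t * 4 ^ n := by rw [four_pow_eq]; ring
    rw [e]; exact c.2
  rw [← Equiv.sum_comp (splitE (2 ^ n) t ht), Fintype.sum_prod_type]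
  have hle : t * 2 ^ n ≤ t * 4 ^ n := by
    rw [four_pow_eq]; exact Nat.mul_le_mul_left _ (Nat.le_mul_of_pos_left _ h2)
  have key : ∀ (a : Fin (2 ^ n)) (s : Fin t),
      Pmat t n ⟨((splitE (2^n) t ht (a, s) : Fin (t * 2^n)) : ℕ),
        lt_of_lt_of_le (splitE (2^n) t ht (a, s)).2 hle⟩ c
        = if a = (⟨2 ^ n - 1 - (c : ℕ) / (t * 2 ^ n), sub_bound _ _ h2⟩ : Fin (2 ^ n))
          then 1 else 0 := by
    intro a s
    rw [Pmat_apply _ _ _ _ ht]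
    have hs := s.2; have ha := a.2
    have hdiv : ((s : ℕ) + t * (a : ℕ)) / t = (a : ℕ) := by
      rw [Nat.add_mul_div_left _ _ ht, Nat.div_eq_of_lt hs]; omega
    simp only [splitE_val, hdiv, Nat.mod_eq_of_lt ha]
    have heq : ((c : ℕ) / (t * 2 ^ n) = 2 ^ n - 1 - (a : ℕ)) ↔
        (a = (⟨2 ^ n - 1 - (c : ℕ) / (t * 2 ^ n), sub_bound _ _ h2⟩ : Fin (2 ^ n))) := by
      rw [Fin.ext_iff]
      generalize (c : ℕ) / (t * 2 ^ n) = x at hc ⊢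
      simp only []
      constructor <;> intro h <;> omega
    rw [if_congr heq rfl rfl]
  rw [Finset.sum_congr rfl (fun a _ => Finset.sum_congr rfl (fun s _ => key a s))]
  simp only [Finset.sum_const, Finset.card_univ, Fintype.card_fin, nsmul_eq_mul, mul_ite,
    mul_one, mul_zero, Finset.sum_ite_eq', Finset.mem_univ, if_true]

lemma hstack_apply {m l₁ l₂ : ℕ} (X : Matrix (Fin m) (Fin l₁) ℤ) (Y : Matrix (Fin m) (Fin l₂) ℤ)
    (i : Fin m) (j : Fin (l₁ + l₂)) :
    hstack X Y i j = if h : (j : ℕ) < l₁ then X i ⟨j, h⟩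
      else Y i ⟨(j : ℕ) - l₁, by have := j.2; omega⟩ := by
  obtain ⟨u, rfl⟩ : ∃ u, finSumFinEquiv u = j := ⟨_, finSumFinEquiv.apply_symm_apply j⟩
  rw [hstack, Matrix.reindex_apply, Matrix.submatrix_apply, Equiv.symm_apply_apply]
  cases u with
  | inl a =>
    have hv : ((finSumFinEquiv (Sum.inl a) : Fin (l₁ + l₂)) : ℕ) = (a : ℕ) := rfl
    rw [dif_pos (hv ▸ a.2)]
    show X i a = X i ⟨_, _⟩
    congr 1
  | inr a =>
    have hv : ((finSumFinEquiv (Sum.inr a) : Fin (l₁ + l₂)) : ℕ) = l₁ + (a : ℕ) := rfl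
    rw [dif_neg (by simp only [hv]; omega)]
    show Y i a = Y i ⟨_, _⟩
    congr 1
    exact Fin.ext (by simp only [hv]; omega)

lemma blockbound {t n b r : ℕ} (hb : b < 2 ^ n) (hr : r < t * 2 ^ n) :
    b * (t * 2 ^ n) + r < t * 4 ^ n := by
  rw [four_pow_eq, show t * (2 ^ n * 2 ^ n) = 2 ^ n * (t * 2 ^ n) by ring]
  calc b * (t * 2 ^ n) + r < (b + 1) * (t * 2 ^ n) := by rw [Nat.succ_mul]; omega
  _ ≤ 2 ^ n * (t * 2 ^ n) := Nat.mul_le_mul_right _ (by omega)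

lemma blocksum (t v : ℕ) (ht : 0 < t) (hv : 0 < v)
    (C₁ : Matrix (Fin (4 * t)) (Fin v) ℤ)
    (hC01 : ∀ i j, C₁ i j = 0 ∨ C₁ i j = 1)
    (hblockC : ∀ j : Fin v, ∀ b : Fin 2,
      (Finset.univ.filter fun i : Fin (4 * t) =>
        (i : ℕ) / (2 * t) = (b : ℕ) ∧ C₁ i j = 1).card = t) :
    ∀ n, 1 ≤ n → ∀ b, ∀ hb : b < 2 ^ n, ∀ c : Fin (vnum v t n),
      ∑ r : Fin (t * 2 ^ n),
        Cmat t v C₁ n ⟨b * (t * 2 ^ n) + (r : ℕ), blockbound hb r.2⟩ c = (t : ℤ) := by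
  intro n
  induction n using Nat.twoStepInduction with
  | zero => omega
  | one =>
    intro _ b hb c
    have hb2 : b < 2 := by
      have h : (2:ℕ) ^ 1 = 2 := by norm_num
      omega
    have h2t : 0 < 2 * t := by omega
    have hcv : (c : ℕ) < v := by have h := c.2; have h2 := vnum_one v t; omega
    have mainbound : ∀ s : Fin (2 * t), (s : ℕ) + 2 * t * b < 4 * t := by
      intro s
      have hs := s.2
      have : 2 * t * b ≤ 2 * t * 1 := Nat.mul_le_mul_left _ (by omega)
      omega
    have main : ∑ s : Fin (2 * t), C₁ ⟨(s : ℕ) + 2 * t * b, mainbound s⟩ ⟨(c : ℕ), hcv⟩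
        = (t : ℤ) := by
      have hcard := hblockC ⟨(c : ℕ), hcv⟩ ⟨b, hb2⟩
      have hsum2 : ∑ s : Fin (2 * t), C₁ ⟨(s : ℕ) + 2 * t * b, mainbound s⟩ ⟨(c : ℕ), hcv⟩
          = ∑ i ∈ Finset.univ.filter (fun i : Fin (4 * t) => (i : ℕ) / (2 * t) = b),
              C₁ i ⟨(c : ℕ), hcv⟩ := by
        refine Finset.sum_bij' (fun s _ => (⟨(s : ℕ) + 2 * t * b, mainbound s⟩ : Fin (4 * t)))
          (fun i _ => (⟨(i : ℕ) % (2 * t), Nat.mod_lt _ h2t⟩ : Fin (2 * t)))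
          ?_ ?_ ?_ ?_ ?_
        · intro a _
          simp only [Finset.mem_filter, Finset.mem_univ, true_and]
          rw [Nat.add_mul_div_left _ _ h2t, Nat.div_eq_of_lt a.2]
          omega
        · intro i _
          exact Finset.mem_univ _
        · intro a _
          exact Fin.ext (by simp [Nat.add_mul_mod_self_left, Nat.mod_eq_of_lt a.2])
        · intro i hi
          simp only [Finset.mem_filter, Finset.mem_univ, true_and] at hi
          exact Fin.ext (by
            show (i : ℕ) % (2 * t) + 2 * t * b = i
            rw [← hi]
            exact Nat.mod_add_div _ _)
        · intro a _
          rfl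
      rw [hsum2]
      have hsum3 : ∑ i ∈ Finset.univ.filter (fun i : Fin (4 * t) => (i : ℕ) / (2 * t) = b),
          C₁ i ⟨(c : ℕ), hcv⟩
          = ∑ i ∈ Finset.univ.filter (fun i : Fin (4 * t) => (i : ℕ) / (2 * t) = b),
              (if C₁ i ⟨(c : ℕ), hcv⟩ = 1 then (1 : ℤ) else 0) := by
        refine Finset.sum_congr rfl fun i _ => ?_
        rcases hC01 i ⟨(c : ℕ), hcv⟩ with h | h <;> rw [h] <;> norm_num
      rw [hsum3, Finset.sum_boole, Finset.filter_filter, hcard]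
    rw [← main]
    have h21 : 2 * t = t * 2 ^ 1 := by ring
    rw [← Equiv.sum_comp (finCongr h21)]
    refine Finset.sum_congr rfl fun s _ => ?_
    simp only [Cmat]
    rw [castM_apply]
    congr 1
    · refine Fin.ext ?_
      simp only [finCongr_apply, Fin.coe_cast]
      rw [pow_one]
      ring
  | more n ih1 ih2 =>
    intro _ b hb c
    have h2N : (0:ℕ) < 2 ^ (n + 1) := Nat.pow_pos (by norm_num)
    have hD : 0 < t * 2 ^ (n + 1) := Nat.mul_pos ht h2N
    have hDq : t * 4 ^ (n + 1) / 2 ^ (n + 1) = t * 2 ^ (n + 1) := t_four_pow_div t (n + 1)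
    have hDq0 : 0 < t * 4 ^ (n + 1) / 2 ^ (n + 1) := by rw [hDq]; exact hD
    have hT4 : 0 < t * 4 ^ (n + 1) := Nat.mul_pos ht (Nat.pow_pos (by norm_num))
    have hvN : 0 < vnum v t (n + 1) := by
      unfold vnum
      exact Nat.mul_pos (by omega) (Nat.pow_pos (by norm_num))
    have hle : t * 2 ^ (n + 1) ≤ t * 4 ^ (n + 1) := by
      rw [four_pow_eq]
      exact Nat.mul_le_mul_left _ (Nat.le_mul_of_pos_left _ h2N)
    have h1 : (t * 2 ^ (n + 1)) * 2 = t * 2 ^ (n + 2) := by ring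
    have rowlt : ∀ (s : Fin 2) (r' : Fin (t * 2 ^ (n + 1))),
        (r' : ℕ) + t * 2 ^ (n + 1) * (s : ℕ) < t * 2 ^ (n + 2) := by
      intro s r'
      have hs := s.2
      have hr := r'.2
      have h2 : t * 2 ^ (n + 1) * (s : ℕ) ≤ t * 2 ^ (n + 1) * 1 :=
        Nat.mul_le_mul_left _ (by omega)
      omega
    rw [← Equiv.sum_comp ((splitE 2 (t * 2 ^ (n + 1)) hD).trans (finCongr h1)),
      Fintype.sum_prod_type]
    by_cases hcA : (c : ℕ) < 1 * 2 * vnum v t (n + 1)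
    · -- C-part column
      have hdivlt : (c : ℕ) / vnum v t (n + 1) < 2 := by
        apply (Nat.div_lt_iff_lt_mul hvN).2
        omega
      have hc2 : (c : ℕ) / vnum v t (n + 1) % 2 = (c : ℕ) / vnum v t (n + 1) :=
        Nat.mod_eq_of_lt hdivlt
      set sfin : Fin 2 := ⟨(c : ℕ) / vnum v t (n + 1), hdivlt⟩ with hsfin
      set cin : Fin (vnum v t (n + 1)) :=
        ⟨(c : ℕ) % vnum v t (n + 1), Nat.mod_lt _ hvN⟩ with hcin
      have term : ∀ (s : Fin 2) (r' : Fin (t * 2 ^ (n + 1)))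
          (pf : b * (t * 2 ^ (n + 2)) + ((r' : ℕ) + t * 2 ^ (n + 1) * (s : ℕ)) < t * 4 ^ (n + 2)),
          Cmat t v C₁ (n + 2)
            ⟨b * (t * 2 ^ (n + 2)) + ((r' : ℕ) + t * 2 ^ (n + 1) * (s : ℕ)), pf⟩ c
          = if s = sfin then
              Cmat t v C₁ (n + 1) ⟨(r' : ℕ), lt_of_lt_of_le r'.2 hle⟩ cin else 0 := by
        intro s r' pf
        have hrw : b * (t * 2 ^ (n + 2)) + ((r' : ℕ) + t * 2 ^ (n + 1) * (s : ℕ))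
            = (r' : ℕ) + (t * 2 ^ (n + 1)) * ((s : ℕ) + 2 * b) := by ring
        have f1 : (b * (t * 2 ^ (n + 2)) + ((r' : ℕ) + t * 2 ^ (n + 1) * (s : ℕ)))
            / (t * 4 ^ (n + 1) / 2 ^ (n + 1)) = (s : ℕ) + 2 * b := by
          rw [hDq, hrw, Nat.add_mul_div_left _ _ hD, Nat.div_eq_of_lt r'.2, Nat.zero_add]
        have f2 : (b * (t * 2 ^ (n + 2)) + ((r' : ℕ) + t * 2 ^ (n + 1) * (s : ℕ)))
            % (t * 4 ^ (n + 1) / 2 ^ (n + 1)) = (r' : ℕ) := by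
          rw [hDq, hrw, Nat.add_mul_mod_self_left, Nat.mod_eq_of_lt r'.2]
        have f3 : (b * (t * 2 ^ (n + 2)) + ((r' : ℕ) + t * 2 ^ (n + 1) * (s : ℕ)))
            / (t * 4 ^ (n + 1) / 2 ^ (n + 1)) % 2 = (s : ℕ) := by
          rw [f1]
          have := s.2
          omega
        simp only [Cmat]
        rw [castM_apply, hstack_apply, dif_pos hcA,
          kron_apply _ _ _ _ hDq0 hvN,
          kron_apply _ _ _ _ (by norm_num : (0:ℕ) < 2) (by norm_num : (0:ℕ) < 2)]
        simp only [Jmat, Matrix.of_apply, one_mul, alphaM, Matrix.one_apply, f2, f3, hc2,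
          Fin.eta, Fin.castLE_mk]
        by_cases hss : (s : ℕ) = (c : ℕ) / vnum v t (n + 1)
        · have h1' : s = sfin := Fin.ext hss
          rw [if_pos h1', if_pos h1', one_mul]
        · have h1' : ¬ s = sfin := fun h => hss (congrArg Fin.val h)
          rw [if_neg h1', if_neg h1', zero_mul]
      refine (Finset.sum_congr rfl fun s _ => Finset.sum_congr rfl fun r' _ =>
        term s r' (blockbound hb (rowlt s r'))).trans ?_
      rw [Finset.sum_comm]
      simp only [Finset.sum_ite_eq', Finset.mem_univ, if_true]
      have hIH := ih2 (by omega) 0 h2N cin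
      rw [← hIH]
      refine Finset.sum_congr rfl fun r' _ => ?_
      congr 1
      exact Fin.ext (by simp)
    · -- P-part column
      have hcub : (c : ℕ) < 2 * vnum v t (n + 1) + 2 * (t * 4 ^ (n + 1)) := by
        have h := c.2
        have h2 := vnum_succ v t n
        omega
      have hjy : (c : ℕ) - 1 * 2 * vnum v t (n + 1) < 2 * (t * 4 ^ (n + 1)) := by omega
      have hdivlt : ((c : ℕ) - 1 * 2 * vnum v t (n + 1)) / (t * 4 ^ (n + 1)) < 2 := by
        apply (Nat.div_lt_iff_lt_mul hT4).2
        omega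
      have hc2 : ((c : ℕ) - 1 * 2 * vnum v t (n + 1)) / (t * 4 ^ (n + 1)) % 2
          = ((c : ℕ) - 1 * 2 * vnum v t (n + 1)) / (t * 4 ^ (n + 1)) :=
        Nat.mod_eq_of_lt hdivlt
      set sfin : Fin 2 := ⟨((c : ℕ) - 1 * 2 * vnum v t (n + 1)) / (t * 4 ^ (n + 1)), hdivlt⟩
      set cin : Fin (t * 4 ^ (n + 1)) :=
        ⟨((c : ℕ) - 1 * 2 * vnum v t (n + 1)) % (t * 4 ^ (n + 1)), Nat.mod_lt _ hT4⟩
      have term : ∀ (s : Fin 2) (r' : Fin (t * 2 ^ (n + 1)))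
          (pf : b * (t * 2 ^ (n + 2)) + ((r' : ℕ) + t * 2 ^ (n + 1) * (s : ℕ)) < t * 4 ^ (n + 2)),
          Cmat t v C₁ (n + 2)
            ⟨b * (t * 2 ^ (n + 2)) + ((r' : ℕ) + t * 2 ^ (n + 1) * (s : ℕ)), pf⟩ c
          = if s = sfin then
              Pmat t (n + 1) ⟨(r' : ℕ), lt_of_lt_of_le r'.2 hle⟩ cin else 0 := by
        intro s r' pf
        have hrw : b * (t * 2 ^ (n + 2)) + ((r' : ℕ) + t * 2 ^ (n + 1) * (s : ℕ))
            = (r' : ℕ) + (t * 2 ^ (n + 1)) * ((s : ℕ) + 2 * b) := by ring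
        have f2 : (b * (t * 2 ^ (n + 2)) + ((r' : ℕ) + t * 2 ^ (n + 1) * (s : ℕ)))
            % (t * 4 ^ (n + 1) / 2 ^ (n + 1)) = (r' : ℕ) := by
          rw [hDq, hrw, Nat.add_mul_mod_self_left, Nat.mod_eq_of_lt r'.2]
        have f3 : (b * (t * 2 ^ (n + 2)) + ((r' : ℕ) + t * 2 ^ (n + 1) * (s : ℕ)))
            / (t * 4 ^ (n + 1) / 2 ^ (n + 1)) % 2 = (s : ℕ) := by
          rw [hDq, hrw, Nat.add_mul_div_left _ _ hD, Nat.div_eq_of_lt r'.2, Nat.zero_add]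
          have := s.2
          omega
        simp only [Cmat]
        rw [castM_apply, hstack_apply, dif_neg hcA,
          kron_apply _ _ _ _ hDq0 hT4,
          kron_apply _ _ _ _ (by norm_num : (0:ℕ) < 2) (by norm_num : (0:ℕ) < 2)]
        simp only [Jmat, Matrix.of_apply, one_mul, alphaM, Matrix.one_apply, f2, f3, hc2,
          Fin.eta, Fin.castLE_mk]
        by_cases hss : (s : ℕ) = ((c : ℕ) - 1 * 2 * vnum v t (n + 1)) / (t * 4 ^ (n + 1))
        · have h1' : s = sfin := Fin.ext hss
          rw [if_pos h1', if_pos h1', one_mul]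
        · have h1' : ¬ s = sfin := fun h => hss (congrArg Fin.val h)
          rw [if_neg h1', if_neg h1', zero_mul]
      refine (Finset.sum_congr rfl fun s _ => Finset.sum_congr rfl fun r' _ =>
        term s r' (blockbound hb (rowlt s r'))).trans ?_
      rw [Finset.sum_comm]
      simp only [Finset.sum_ite_eq', Finset.mem_univ, if_true]
      exact Psum t (n + 1) ht cin

end AuxLemmas

/-- Equation (14): `P_n · C_n = t · J_{t·4^n, v_n}` where `v_n = (v+(2^{n+1}−4)t)·2^{n−1}`. -/
theorem Pmat_mul_Cmat
    (t v k : ℕ) (ht : 0 < t) (hv : 0 < v) (hk : 0 < k)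
    (C₁ : Matrix (Fin (4 * t)) (Fin v) ℤ)
    (hC01 : ∀ i j, C₁ i j = 0 ∨ C₁ i j = 1)
    (hblockC : ∀ j : Fin v, ∀ b : Fin 2,
      (Finset.univ.filter fun i : Fin (4 * t) =>
        (i : ℕ) / (2 * t) = (b : ℕ) ∧ C₁ i j = 1).card = t)
    (n : ℕ) (hn : 1 ≤ n) :
    Pmat t n * Cmat t v C₁ n = (t : ℤ) • Jmat (t * 4 ^ n) (vnum v t n) := by
  have h2n : (0:ℕ) < 2 ^ n := Nat.pow_pos (by norm_num)
  have htn : (0:ℕ) < t * 2 ^ n := Nat.mul_pos ht h2n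
  have hEq : (t * 2 ^ n) * 2 ^ n = t * 4 ^ n := by rw [four_pow_eq]; ring
  ext i c
  have hRHS : ((t : ℤ) • Jmat (t * 4 ^ n) (vnum v t n)) i c = (t : ℤ) := by
    simp [Jmat]
  rw [Matrix.mul_apply, hRHS]
  have hB : 2 ^ n - 1 - ((i : ℕ) / t % 2 ^ n) < 2 ^ n := sub_bound _ _ h2n
  set Bfin : Fin (2 ^ n) := ⟨2 ^ n - 1 - ((i : ℕ) / t % 2 ^ n), hB⟩ with hBfin
  rw [← Equiv.sum_comp ((splitE (2 ^ n) (t * 2 ^ n) htn).trans (finCongr hEq)),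
    Fintype.sum_prod_type]
  have term : ∀ (q : Fin (2 ^ n)) (r : Fin (t * 2 ^ n)),
      Pmat t n i (((splitE (2 ^ n) (t * 2 ^ n) htn).trans (finCongr hEq)) (q, r))
        * Cmat t v C₁ n (((splitE (2 ^ n) (t * 2 ^ n) htn).trans (finCongr hEq)) (q, r)) c
      = if q = Bfin then
          Cmat t v C₁ n (((splitE (2 ^ n) (t * 2 ^ n) htn).trans (finCongr hEq)) (q, r)) c
        else 0 := by
    intro q r
    rw [Pmat_apply _ _ _ _ ht]
    have hdv : ((((splitE (2 ^ n) (t * 2 ^ n) htn).trans (finCongr hEq)) (q, r) : Fin (t * 4 ^ n)) : ℕ)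
        / (t * 2 ^ n) = (q : ℕ) := by
      show ((r : ℕ) + (t * 2 ^ n) * (q : ℕ)) / (t * 2 ^ n) = (q : ℕ)
      rw [Nat.add_mul_div_left _ _ htn, Nat.div_eq_of_lt r.2, Nat.zero_add]
    have hiff : ((((splitE (2 ^ n) (t * 2 ^ n) htn).trans (finCongr hEq)) (q, r) : Fin (t * 4 ^ n)) : ℕ)
        / (t * 2 ^ n) = 2 ^ n - 1 - ((i : ℕ) / t % 2 ^ n) ↔ q = Bfin := by
      rw [hdv]
      exact ⟨fun h => Fin.ext h, fun h => congrArg Fin.val h⟩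
    by_cases hq : q = Bfin
    · rw [if_pos (hiff.2 hq), one_mul, if_pos hq]
    · rw [if_neg (fun h => hq (hiff.1 h)), zero_mul, if_neg hq]
  refine (Finset.sum_congr rfl fun q _ => Finset.sum_congr rfl fun r _ => term q r).trans ?_
  rw [Finset.sum_comm]
  simp only [Finset.sum_ite_eq', Finset.mem_univ, if_true]
  rw [← blocksum t v ht hv C₁ hC01 hblockC n hn (2 ^ n - 1 - ((i : ℕ) / t % 2 ^ n)) hB c]
  refine Finset.sum_congr rfl fun r _ => ?_
  congr 1
  refine Fin.ext ?_
  show (r : ℕ) + (t * 2 ^ n) * (2 ^ n - 1 - ((i : ℕ) / t % 2 ^ n))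
    = (2 ^ n - 1 - ((i : ℕ) / t % 2 ^ n)) * (t * 2 ^ n) + (r : ℕ)
  have h := Nat.mul_comm (t * 2 ^ n) (2 ^ n - 1 - ((i : ℕ) / t % 2 ^ n))
  omega
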